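/- Let r \ge 2, \alpha \ge 0, and suppose |h(d)| \le C d^\alpha with \alpha < 2r - 1. Then for 1 \le B \le A \le x, \sum_{(x/A)^{1/r} < d < (x/B)^{1/r}} |h(d)| \cdot (\lfloor x/d^r \rfloor - \lfloor x/(d^r+1) \rfloor) \ll (A^2/x)(x/A)^{(1+\alpha)/r} + (x/B)^{(1+\alpha)/r}. -/

import Mathlib

open Real Finset

private lemma bern_neg {m q : ℝ} (hm : 1 ≤ m) (hq : 0 < q) :
    1 + q / (m + 1) ≤ (1 + 1 / m) ^ q := by
  have hm0 : (0:ℝ) < m := lt_of_lt_of_le one_pos hm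
  have hm1 : (0:ℝ) < m + 1 := by linarith
  rcases le_or_gt 1 q with h1 | h1
  · have hb : (-1:ℝ) ≤ 1 / m := by
      have : (0:ℝ) ≤ 1 / m := by positivity
      linarith
    have := one_add_mul_self_le_rpow_one_add hb h1
    have h2 : q / (m + 1) ≤ q * (1 / m) := by
      rw [div_le_iff₀ hm1]
      rw [mul_one_div, div_mul_eq_mul_div, le_div_iff₀ hm0]
      nlinarith
    linarith
  · -- 0 < q < 1
    set t : ℝ := 1 / (m + 1) with ht
    have ht0 : 0 < t := by positivity
    have ht1 : t ≤ 1 / 2 := by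
      rw [ht, div_le_div_iff₀ hm1 two_pos]; linarith
    have hb : (-1:ℝ) ≤ -t := by linarith
    have h2 : (1 + -t) ^ q ≤ 1 + q * (-t) :=
      rpow_one_add_le_one_add_mul_self hb hq.le h1.le
    have hqt : q * t < 1 := by nlinarith
    have hpos : (0:ℝ) < 1 - q * t := by linarith
    have heq : 1 + -t = m / (m + 1) := by rw [ht]; field_simp; ring
    have hpos2 : (0:ℝ) < (m / (m+1)) ^ q := rpow_pos_of_pos (by positivity) q
    have h3 : (m / (m + 1)) ^ q ≤ 1 - q * t := by
      rw [← heq]; convert h2 using 1; ring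
    have h4 : (1 + q * t) * (m / (m+1)) ^ q ≤ 1 := by
      calc (1 + q * t) * (m / (m+1)) ^ q ≤ (1 + q * t) * (1 - q * t) := by
            apply mul_le_mul_of_nonneg_left h3 (by positivity)
        _ = 1 - (q*t)^2 := by ring
        _ ≤ 1 := by nlinarith
    have h5 : 1 + q * t ≤ ((m / (m+1)) ^ q)⁻¹ := by
      rw [← one_div]
      exact (le_div_iff₀ hpos2).mpr h4
    have h6 : ((m / (m+1)) ^ q)⁻¹ = (1 + 1 / m) ^ q := by
      rw [← Real.inv_rpow (by positivity)]
      congr 1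
      field_simp
    rw [h6] at h5
    calc 1 + q / (m + 1) = 1 + q * t := by rw [ht]; ring
      _ ≤ _ := h5

private lemma key_step {m s : ℝ} (hm : 1 ≤ m) (hs : 1 < s) :
    (s - 1) * (m + 1) ^ (-s) ≤ m ^ (1 - s) - (m + 1) ^ (1 - s) := by
  have hm0 : (0:ℝ) < m := lt_of_lt_of_le one_pos hm
  have hm1 : (0:ℝ) < m + 1 := by linarith
  set q : ℝ := s - 1 with hqdef
  have hq : 0 < q := by linarith
  have hb := bern_neg hm hq
  have hP : (0:ℝ) < (m + 1) ^ (-q) := rpow_pos_of_pos hm1 _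
  have hmul := mul_le_mul_of_nonneg_right hb hP.le
  have hrhs : (1 + 1 / m) ^ q * (m + 1) ^ (-q) = m ^ (1 - s) := by
    have h1 : (1:ℝ) + 1 / m = (m + 1) / m := by field_simp
    rw [h1, Real.div_rpow hm1.le hm0.le, Real.rpow_neg hm1.le]
    have hne : (m + 1) ^ q ≠ 0 := (rpow_pos_of_pos hm1 q).ne'
    have hne2 : m ^ q ≠ 0 := (rpow_pos_of_pos hm0 q).ne'
    have hms : m ^ (1 - s) = (m ^ q)⁻¹ := by
      rw [← Real.rpow_neg hm0.le]
      congr 1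
      rw [hqdef]; ring
    rw [hms]
    field_simp
  have hlhs : (1 + q / (m + 1)) * (m + 1) ^ (-q)
      = (m + 1) ^ (1 - s) + q * (m + 1) ^ (-s) := by
    have h1 : ((m:ℝ) + 1) ^ (-s) = (m + 1) ^ (-q) / (m + 1) := by
      rw [← Real.rpow_sub_one hm1.ne']
      congr 1
      rw [hqdef]; ring
    have h2 : ((m:ℝ) + 1) ^ (1 - s) = (m + 1) ^ (-q) := by
      congr 1; rw [hqdef]; ring
    rw [h1, h2]
    field_simp
  rw [hrhs, hlhs] at hmul
  linarith

private lemma tail_sum {s : ℝ} (hs : 1 < s) {D : ℕ} (hD : 1 ≤ D) (M : ℕ) :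
    ∑ d ∈ Finset.Ioc D M, (d : ℝ) ^ (-s) ≤ (D : ℝ) ^ (1 - s) / (s - 1) := by
  have hs1 : (0:ℝ) < s - 1 := by linarith
  have main : ∀ M : ℕ, ∑ d ∈ Finset.Ioc D M, (d : ℝ) ^ (-s)
      ≤ ((D : ℝ) ^ (1 - s) - ((max D M : ℕ) : ℝ) ^ (1 - s)) / (s - 1) := by
    intro M
    induction M with
    | zero =>
      rw [Finset.Ioc_eq_empty (by omega)]
      simp [Nat.max_eq_left (Nat.zero_le D)]
    | succ M ih =>
      rcases le_or_gt (M + 1) D with hle | hlt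
      · rw [Finset.Ioc_eq_empty (by omega)]
        rw [Nat.max_eq_left hle]
        simp
      · have hDM : D ≤ M := by omega
        rw [Finset.sum_Ioc_succ_top (by omega : D ≤ M), Nat.max_eq_right (by omega)]
        rw [Nat.max_eq_right hDM] at ih
        have hM1 : (1:ℝ) ≤ (M:ℝ) := by exact_mod_cast hD.trans hDM
        have hk := key_step hM1 hs
        have hk' : ((M + 1 : ℕ) : ℝ) ^ (-s)
            ≤ ((M:ℝ) ^ (1 - s) - ((M + 1 : ℕ) : ℝ) ^ (1 - s)) / (s - 1) := by
          rw [le_div_iff₀ hs1]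
          push_cast
          nlinarith [key_step hM1 hs]
        calc ∑ d ∈ Finset.Ioc D M, (d : ℝ) ^ (-s) + ((M + 1 : ℕ) : ℝ) ^ (-s)
            ≤ ((D : ℝ) ^ (1 - s) - (M : ℝ) ^ (1 - s)) / (s - 1)
              + ((M:ℝ) ^ (1 - s) - ((M + 1 : ℕ) : ℝ) ^ (1 - s)) / (s - 1) :=
              add_le_add ih hk'
          _ = ((D : ℝ) ^ (1 - s) - ((M + 1 : ℕ) : ℝ) ^ (1 - s)) / (s - 1) := by ring
  calc ∑ d ∈ Finset.Ioc D M, (d : ℝ) ^ (-s)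
      ≤ ((D : ℝ) ^ (1 - s) - ((max D M : ℕ) : ℝ) ^ (1 - s)) / (s - 1) := main M
    _ ≤ (D : ℝ) ^ (1 - s) / (s - 1) := by
        rw [div_le_div_iff_of_pos_right hs1]
        have : (0:ℝ) ≤ ((max D M : ℕ) : ℝ) ^ (1 - s) := rpow_nonneg (by positivity) _
        linarith

set_option maxHeartbeats 2000000 in
theorem stmt_10 (r : ℕ) (hr : 2 ≤ r) (h : ℕ → ℝ) (C α : ℝ) (hC : 0 ≤ C)
    (hα0 : 0 ≤ α) (hα1 : α < 2 * (r : ℝ) - 1)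
    (hh : ∀ d : ℕ, 1 ≤ d → |h d| ≤ C * (d : ℝ) ^ α) :
    ∃ K > 0, ∀ x A B : ℝ, 2 ≤ x → 1 ≤ B → B ≤ A → A ≤ x →
      ∑ d ∈ Finset.Ioo ⌊(x / A) ^ ((1 : ℝ) / r)⌋₊ ⌈(x / B) ^ ((1 : ℝ) / r)⌉₊,
        |h d| * ((⌊x / (d : ℝ) ^ r⌋₊ : ℝ) - (⌊x / ((d : ℝ) ^ r + 1)⌋₊ : ℝ))
      ≤ K * (A ^ 2 / x * (x / A) ^ ((1 + α) / r) + (x / B) ^ ((1 + α) / r)) := by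
  have hr0 : (0:ℝ) < (r:ℝ) := by exact_mod_cast (by omega : 0 < r)
  set s : ℝ := 2 * (r:ℝ) - α with hsdef
  have hs1 : 1 < s := by linarith
  set K : ℝ := C * (2:ℝ) ^ (2 * (r:ℝ)) / (s - 1) + 2 * C + 1 with hKdef
  have hK0 : 0 < K := by
    simp only [hKdef]
    have h1 : 0 ≤ C * (2:ℝ) ^ (2 * (r:ℝ)) / (s - 1) :=
      div_nonneg (by positivity) (by linarith)
    have h2 : 0 ≤ 2 * C := by linarith
    linarith
  refine ⟨K, hK0, ?_⟩
  intro x A B hx hB hBA hAx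
  have hB0 : (0:ℝ) < B := lt_of_lt_of_le one_pos hB
  have hA0 : (0:ℝ) < A := lt_of_lt_of_le hB0 hBA
  have hx0 : (0:ℝ) < x := by linarith
  have huA : (1:ℝ) ≤ x / A := (one_le_div hA0).mpr hAx
  have huB : (1:ℝ) ≤ x / B := by
    refine huA.trans ?_
    gcongr
  set yA : ℝ := (x / A) ^ ((1:ℝ) / r) with hyAdef
  set yB : ℝ := (x / B) ^ ((1:ℝ) / r) with hyBdef
  have hyA1 : (1:ℝ) ≤ yA := Real.one_le_rpow huA (by positivity)
  have hyB1 : (1:ℝ) ≤ yB := Real.one_le_rpow huB (by positivity)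
  set D : ℕ := ⌊yA⌋₊ with hDdef
  set M : ℕ := ⌈yB⌉₊ with hMdef
  have hD1 : 1 ≤ D := Nat.le_floor (by exact_mod_cast hyA1)
  -- termwise bound
  have hterm : ∀ d ∈ Finset.Ioo D M,
      |h d| * ((⌊x / (d : ℝ) ^ r⌋₊ : ℝ) - (⌊x / ((d : ℝ) ^ r + 1)⌋₊ : ℝ))
      ≤ C * x * (d:ℝ) ^ (-s) + C * (d:ℝ) ^ α := by
    intro d hd
    obtain ⟨hdD, hdM⟩ := Finset.mem_Ioo.mp hd
    have hd1 : 1 ≤ d := by omega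
    have hdR : (1:ℝ) ≤ (d:ℝ) := by exact_mod_cast hd1
    have hd0 : (0:ℝ) < (d:ℝ) := by linarith
    set P : ℝ := (d:ℝ) ^ r with hPdef
    have hP1 : (1:ℝ) ≤ P := one_le_pow₀ hdR
    have hP0 : (0:ℝ) < P := by linarith
    have hfl1 : (⌊x / P⌋₊ : ℝ) ≤ x / P := Nat.floor_le (by positivity)
    have hfl2 : x / (P + 1) - 1 < (⌊x / (P + 1)⌋₊ : ℝ) := Nat.sub_one_lt_floor _
    have hdiff : (⌊x / P⌋₊ : ℝ) - (⌊x / (P + 1)⌋₊ : ℝ) ≤ x / P - x / (P + 1) + 1 := by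
      linarith
    have hdiff0 : (0:ℝ) ≤ (⌊x / P⌋₊ : ℝ) - (⌊x / (P + 1)⌋₊ : ℝ) := by
      have h0 : ⌊x / (P + 1)⌋₊ ≤ ⌊x / P⌋₊ := Nat.floor_mono (by gcongr <;> linarith)
      have h0' : ((⌊x / (P + 1)⌋₊ : ℕ) : ℝ) ≤ ((⌊x / P⌋₊ : ℕ) : ℝ) := by exact_mod_cast h0
      linarith
    have hsq : x / P - x / (P + 1) ≤ x / P ^ 2 := by
      have h1 : x / P - x / (P + 1) = x / (P * (P + 1)) := by
        field_simp
        ring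
      rw [h1]
      gcongr
      nlinarith
    have hhd := hh d hd1
    have habs0 : (0:ℝ) ≤ |h d| := abs_nonneg _
    have hCd0 : (0:ℝ) ≤ C * (d:ℝ) ^ α := by positivity
    have hmain : |h d| * ((⌊x / P⌋₊ : ℝ) - (⌊x / (P + 1)⌋₊ : ℝ))
        ≤ (C * (d:ℝ) ^ α) * (x / P ^ 2 + 1) :=
      mul_le_mul hhd (by linarith) hdiff0 hCd0
    have hP2 : P ^ 2 = (d:ℝ) ^ (2 * (r:ℝ)) := by
      rw [hPdef, ← pow_mul, ← Real.rpow_natCast (d:ℝ) (r * 2)]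
      congr 1
      push_cast
      ring
    have hexp : (d:ℝ) ^ α / (d:ℝ) ^ (2 * (r:ℝ)) = (d:ℝ) ^ (-s) := by
      rw [← Real.rpow_sub hd0]
      congr 1
      rw [hsdef]; ring
    have heq : (C * (d:ℝ) ^ α) * (x / P ^ 2 + 1)
        = C * x * (d:ℝ) ^ (-s) + C * (d:ℝ) ^ α := by
      rw [hP2, ← hexp]
      have hne : (d:ℝ) ^ (2 * (r:ℝ)) ≠ 0 := (rpow_pos_of_pos hd0 _).ne'
      field_simp
    rw [← heq]
    exact hmain
  have hsum1 : ∑ d ∈ Finset.Ioo D M, (d:ℝ) ^ (-s) ≤ (D:ℝ) ^ (1 - s) / (s - 1) := by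
    refine le_trans (Finset.sum_le_sum_of_subset_of_nonneg ?_ ?_) (tail_sum hs1 hD1 M)
    · intro d hd
      obtain ⟨h1, h2⟩ := Finset.mem_Ioo.mp hd
      exact Finset.mem_Ioc.mpr ⟨h1, by omega⟩
    · intro i _ _
      exact rpow_nonneg (by positivity) _
  -- bound D^{1-s}
  have hyA2D : yA ≤ 2 * (D:ℝ) := by
    have h1 : yA < (D:ℝ) + 1 := Nat.lt_floor_add_one yA
    have h2 : (1:ℝ) ≤ (D:ℝ) := by exact_mod_cast hD1
    linarith
  have hD0 : (0:ℝ) < yA / 2 := by linarith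
  have hDbound : (D:ℝ) ^ (1 - s) ≤ (2:ℝ) ^ (s - 1) * yA ^ (1 - s) := by
    have h1 : (D:ℝ) ^ (1 - s) ≤ (yA / 2) ^ (1 - s) :=
      Real.rpow_le_rpow_of_nonpos hD0 (by linarith) (by linarith)
    have h2 : (yA / 2) ^ (1 - s) = yA ^ (1 - s) * (2:ℝ) ^ (s - 1) := by
      rw [Real.div_rpow (by linarith) (by norm_num), div_eq_mul_inv,
        ← Real.rpow_neg (by norm_num : (0:ℝ) ≤ 2)]
      congr 1
      ring
    rw [h2] at h1
    linarith
  have h2pow : (2:ℝ) ^ (s - 1) ≤ (2:ℝ) ^ (2 * (r:ℝ)) :=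
    Real.rpow_le_rpow_of_exponent_le one_le_two (by linarith)
  -- the key rpow identity for term 1
  have hT1 : x * yA ^ (1 - s) = A ^ 2 / x * (x / A) ^ ((1 + α) / r) := by
    have huA0 : (0:ℝ) < x / A := by positivity
    have e1 : yA ^ (1 - s) = (x / A) ^ (((1:ℝ) / r) * (1 - s)) := by
      rw [hyAdef, ← Real.rpow_mul huA0.le]
    have e2 : ((1:ℝ) / r) * (1 - s) = (1 + α) / r - 2 := by
      rw [hsdef]
      field_simp
      ring
    have e3 : (x / A) ^ ((1 + α) / r - 2) = (x / A) ^ ((1 + α) / r) / (x / A) ^ (2:ℝ) :=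
      Real.rpow_sub huA0 _ _
    rw [e1, e2, e3, Real.rpow_two]
    have hAne : A ≠ 0 := hA0.ne'
    have hxne : x ≠ 0 := hx0.ne'
    field_simp
  have hT1nn : (0:ℝ) ≤ A ^ 2 / x * (x / A) ^ ((1 + α) / r) := by positivity
  have hT2nn : (0:ℝ) ≤ (x / B) ^ ((1 + α) / r) := by positivity
  -- term 2
  have hsum2 : ∑ d ∈ Finset.Ioo D M, (d:ℝ) ^ α ≤ 2 * (x / B) ^ ((1 + α) / r) := by
    have hdle : ∀ d ∈ Finset.Ioo D M, (d:ℝ) ^ α ≤ yB ^ α := by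
      intro d hd
      obtain ⟨_, hdM⟩ := Finset.mem_Ioo.mp hd
      have h1 : (d:ℝ) ≤ (M:ℝ) - 1 := by
        have h1a : d + 1 ≤ M := hdM
        have h1b : ((d + 1 : ℕ) : ℝ) ≤ ((M : ℕ) : ℝ) := by exact_mod_cast h1a
        push_cast at h1b
        linarith
      have h2 : (M:ℝ) < yB + 1 := Nat.ceil_lt_add_one (by linarith)
      exact Real.rpow_le_rpow (by positivity) (by linarith) hα0
    calc ∑ d ∈ Finset.Ioo D M, (d:ℝ) ^ α ≤ ∑ _d ∈ Finset.Ioo D M, yB ^ α :=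
          Finset.sum_le_sum hdle
      _ = (Finset.Ioo D M).card * yB ^ α := by rw [Finset.sum_const, nsmul_eq_mul]
      _ ≤ (2 * yB) * yB ^ α := by
          apply mul_le_mul_of_nonneg_right ?_ (rpow_nonneg (by linarith) _)
          have hcard : (Finset.Ioo D M).card ≤ M := by
            rw [Nat.card_Ioo]; omega
          have h2 : (M:ℝ) < yB + 1 := Nat.ceil_lt_add_one (by linarith)
          have h3 : ((Finset.Ioo D M).card : ℝ) ≤ (M:ℝ) := by exact_mod_cast hcard
          linarith
      _ = 2 * (x / B) ^ ((1 + α) / r) := by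
          have huB0 : (0:ℝ) < x / B := by positivity
          have e1 : yB * yB ^ α = yB ^ (1 + α) := by
            rw [Real.rpow_add (by linarith : (0:ℝ) < yB), Real.rpow_one]
          have e2 : yB ^ (1 + α) = (x / B) ^ ((1 + α) / r) := by
            rw [hyBdef, ← Real.rpow_mul huB0.le]
            congr 1
            ring
          rw [mul_assoc, e1, e2]
  -- put everything together
  calc ∑ d ∈ Finset.Ioo D M,
        |h d| * ((⌊x / (d : ℝ) ^ r⌋₊ : ℝ) - (⌊x / ((d : ℝ) ^ r + 1)⌋₊ : ℝ))
      ≤ ∑ d ∈ Finset.Ioo D M, (C * x * (d:ℝ) ^ (-s) + C * (d:ℝ) ^ α) :=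
        Finset.sum_le_sum hterm
    _ = C * x * (∑ d ∈ Finset.Ioo D M, (d:ℝ) ^ (-s))
        + C * (∑ d ∈ Finset.Ioo D M, (d:ℝ) ^ α) := by
        rw [Finset.sum_add_distrib, Finset.mul_sum, Finset.mul_sum]
    _ ≤ C * x * ((D:ℝ) ^ (1 - s) / (s - 1)) + C * (2 * (x / B) ^ ((1 + α) / r)) := by
        gcongr
    _ ≤ C * x * ((2:ℝ) ^ (2 * (r:ℝ)) * yA ^ (1 - s) / (s - 1))
        + 2 * C * (x / B) ^ ((1 + α) / r) := by
        have hnum : (D:ℝ) ^ (1 - s) ≤ (2:ℝ) ^ (2 * (r:ℝ)) * yA ^ (1 - s) :=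
          hDbound.trans (mul_le_mul_of_nonneg_right h2pow (rpow_nonneg (by linarith) _))
        have hfirst : C * x * ((D:ℝ) ^ (1 - s) / (s - 1))
            ≤ C * x * ((2:ℝ) ^ (2 * (r:ℝ)) * yA ^ (1 - s) / (s - 1)) := by
          apply mul_le_mul_of_nonneg_left ?_ (by positivity)
          rw [div_le_div_iff_of_pos_right (by linarith : (0:ℝ) < s - 1)]
          exact hnum
        linarith
    _ = (C * (2:ℝ) ^ (2 * (r:ℝ)) / (s - 1)) * (A ^ 2 / x * (x / A) ^ ((1 + α) / r))
        + 2 * C * (x / B) ^ ((1 + α) / r) := by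
        rw [← hT1]
        ring
    _ ≤ K * (A ^ 2 / x * (x / A) ^ ((1 + α) / r)) + K * ((x / B) ^ ((1 + α) / r)) := by
        have h1 : C * (2:ℝ) ^ (2 * (r:ℝ)) / (s - 1) ≤ K := by
          rw [hKdef]; linarith
        have h2 : 2 * C ≤ K := by
          rw [hKdef]
          have : 0 ≤ C * (2:ℝ) ^ (2 * (r:ℝ)) / (s - 1) :=
            div_nonneg (by positivity) (by linarith)
          linarith
        gcongr
    _ = K * (A ^ 2 / x * (x / A) ^ ((1 + α) / r) + (x / B) ^ ((1 + α) / r)) := by ring
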